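/- For all A, B ∈ 𝔸 one has ∫₀¹ exp((1−τ) • A) · B · exp(τ • A) dτ = Σ_{n=0}^{∞} (1/(n+1)!) • ( Σ_{p=0}^{n} A^p · B · A^{n−p} ), where the series on the right converges absolutely in 𝔸. (The term-by-term power-series evaluation of the Duhamel integral carried out in the proof of the third identity of the Theorem of Appendix G.1.) -/

import Mathlib

open MeasureTheory intervalIntegral Finset

lemma beta_nat (p q : ℕ) :
    (∫ τ in (0:ℝ)..1, (1 - τ) ^ p * τ ^ q)
      = (p.factorial * q.factorial : ℝ) / (p + q + 1).factorial := by
  have hq : (0:ℝ) < Complex.re (q + 1) := by simp; positivity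
  have hp : (0:ℝ) < Complex.re (p + 1) := by simp; positivity
  have h := Complex.Gamma_mul_Gamma_eq_betaIntegral hq hp
  rw [Complex.betaIntegral] at h
  have hβ : (∫ x : ℝ in (0)..1, (x : ℂ) ^ ((q:ℂ) + 1 - 1) * (1 - (x : ℂ)) ^ ((p:ℂ) + 1 - 1))
      = ((∫ τ in (0:ℝ)..1, (1 - τ) ^ p * τ ^ q : ℝ) : ℂ) := by
    rw [← intervalIntegral.integral_ofReal]
    apply intervalIntegral.integral_congr
    intro x _
    simp only [add_sub_cancel_right, Complex.cpow_natCast]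
    push_cast
    ring
  rw [hβ] at h
  have h1 : Complex.Gamma ((q:ℂ) + 1) = (q.factorial : ℂ) := Complex.Gamma_nat_eq_factorial q
  have h2 : Complex.Gamma ((p:ℂ) + 1) = (p.factorial : ℂ) := Complex.Gamma_nat_eq_factorial p
  have h3 : Complex.Gamma ((q:ℂ) + 1 + ((p:ℂ) + 1)) = ((p+q+1).factorial : ℂ) := by
    have : (q:ℂ) + 1 + ((p:ℂ) + 1) = ((p + q + 1 : ℕ) : ℂ) + 1 := by push_cast; ring
    rw [this, Complex.Gamma_nat_eq_factorial]
  rw [h1, h2, h3] at h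
  have hne : ((p+q+1).factorial : ℂ) ≠ 0 := by exact_mod_cast (p+q+1).factorial_ne_zero
  field_simp
  have := h.symm
  rw [mul_comm] at this
  rw [mul_comm (p.factorial:ℝ)]
  exact_mod_cast this

section main
variable {𝔸 : Type*} [NormedRing 𝔸] [NormedAlgebra ℝ 𝔸] [CompleteSpace 𝔸] (A B : 𝔸)

lemma apow_bound (p : ℕ) : ‖A ^ p‖ ≤ (‖(1:𝔸)‖ + 1) * ‖A‖ ^ p := by
  rcases Nat.eq_zero_or_pos p with h | h
  · subst h; simp only [pow_zero, mul_one]; linarith [norm_nonneg (1:𝔸)]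
  · calc ‖A ^ p‖ ≤ ‖A‖ ^ p := norm_pow_le' A h
      _ ≤ (‖(1:𝔸)‖ + 1) * ‖A‖ ^ p := by
          nlinarith [norm_nonneg (1:𝔸), pow_nonneg (norm_nonneg A) p]

lemma term_bound (p q : ℕ) :
    ‖A ^ p * B * A ^ q‖ ≤ ((‖(1:𝔸)‖ + 1) * (‖(1:𝔸)‖ + 1) * ‖B‖) * (‖A‖ ^ p * ‖A‖ ^ q) := by
  have h1 := apow_bound A p
  have h2 := apow_bound A q
  calc ‖A ^ p * B * A ^ q‖ ≤ ‖A ^ p * B‖ * ‖A ^ q‖ := norm_mul_le _ _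
    _ ≤ ‖A ^ p‖ * ‖B‖ * ‖A ^ q‖ :=
        mul_le_mul_of_nonneg_right (norm_mul_le _ _) (norm_nonneg _)
    _ ≤ ((‖(1:𝔸)‖ + 1) * ‖A‖ ^ p) * ‖B‖ * ((‖(1:𝔸)‖ + 1) * ‖A‖ ^ q) := by
        gcongr <;> positivity
    _ = ((‖(1:𝔸)‖ + 1) * (‖(1:𝔸)‖ + 1) * ‖B‖) * (‖A‖ ^ p * ‖A‖ ^ q) := by ring


lemma exp_expand (t : ℝ) :
    NormedSpace.exp (t • A) = ∑' p : ℕ, (t ^ p / p.factorial) • A ^ p := by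
  rw [NormedSpace.exp_eq_tsum ℝ]
  exact tsum_congr fun n => by rw [smul_pow, smul_smul, div_eq_mul_inv, mul_comm]

lemma summable_coeff (t : ℝ) : Summable (fun p : ℕ => (t ^ p / p.factorial) • A ^ p) := by
  have h := NormedSpace.expSeries_summable' (𝕂 := ℝ) (t • A)
  have e : (fun p : ℕ => (t ^ p / p.factorial) • A ^ p)
      = fun n : ℕ => (n.factorial : ℝ)⁻¹ • (t • A) ^ n := by
    funext n; rw [smul_pow, smul_smul, div_eq_mul_inv, mul_comm]
  rw [e]; exact h

set_option maxHeartbeats 1000000 in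
lemma summable_g (a b : ℝ) :
    Summable (fun pq : ℕ × ℕ =>
      (a ^ pq.1 * b ^ pq.2 / (pq.1.factorial * pq.2.factorial)) • (A ^ pq.1 * B * A ^ pq.2)) := by
  set D : ℝ := (‖(1:𝔸)‖ + 1) * (‖(1:𝔸)‖ + 1) * ‖B‖ with hD
  have hD0 : 0 ≤ D := by positivity
  apply Summable.of_norm_bounded
      (g := fun pq : ℕ × ℕ =>
        ((|a| * ‖A‖) ^ pq.1 / pq.1.factorial) * (D * ((|b| * ‖A‖) ^ pq.2 / pq.2.factorial)))
  · exact Summable.mul_of_nonneg (Real.summable_pow_div_factorial _)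
      ((Real.summable_pow_div_factorial _).mul_left D)
      (fun p => by positivity) (fun q => by positivity)
  · rintro ⟨p, q⟩
    have hb := term_bound A B p q
    have h1 : ‖(a ^ p * b ^ q / (p.factorial * q.factorial) : ℝ)‖
        = |a| ^ p * |b| ^ q / (p.factorial * q.factorial) := by
      rw [Real.norm_eq_abs, abs_div, abs_mul, abs_pow, abs_pow]
      congr 1
      rw [abs_of_nonneg (by positivity)]
    rw [norm_smul, h1]
    calc |a| ^ p * |b| ^ q / (p.factorial * q.factorial) * ‖A ^ p * B * A ^ q‖
        ≤ |a| ^ p * |b| ^ q / (p.factorial * q.factorial)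
            * (D * (‖A‖ ^ p * ‖A‖ ^ q)) := by
          apply mul_le_mul_of_nonneg_left hb (by positivity)
      _ = ((|a| * ‖A‖) ^ p / p.factorial) * (D * ((|b| * ‖A‖) ^ q / q.factorial)) := by
          rw [mul_pow, mul_pow]
          have e1 : (p.factorial : ℝ) ≠ 0 := Nat.cast_ne_zero.2 p.factorial_ne_zero
          have e2 : (q.factorial : ℝ) ≠ 0 := Nat.cast_ne_zero.2 q.factorial_ne_zero
          field_simp

lemma summable_coeff_norm (t : ℝ) :
    Summable (fun p : ℕ => ‖(t ^ p / p.factorial) • A ^ p‖) := by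
  refine Summable.of_nonneg_of_le (fun p => norm_nonneg _) (fun p => ?_)
      ((Real.summable_pow_div_factorial (|t| * ‖A‖)).mul_left (‖(1:𝔸)‖ + 1))
  · rw [norm_smul, Real.norm_eq_abs, abs_div, abs_pow, abs_of_nonneg (by positivity : (0:ℝ) ≤ (p.factorial : ℝ))]
    calc |t| ^ p / p.factorial * ‖A ^ p‖
        ≤ |t| ^ p / p.factorial * ((‖(1:𝔸)‖ + 1) * ‖A‖ ^ p) :=
          mul_le_mul_of_nonneg_left (apow_bound A p) (by positivity)
      _ = (‖(1:𝔸)‖ + 1) * ((|t| * ‖A‖) ^ p / p.factorial) := by rw [mul_pow]; ring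

lemma pointwise (τ : ℝ) :
    NormedSpace.exp ((1 - τ) • A) * B * NormedSpace.exp (τ • A)
      = ∑' pq : ℕ × ℕ,
          ((1 - τ) ^ pq.1 * τ ^ pq.2 / (pq.1.factorial * pq.2.factorial))
            • (A ^ pq.1 * B * A ^ pq.2) := by
  have hu := summable_coeff A (1 - τ)
  have hv := summable_coeff A τ
  have huB : Summable (fun p : ℕ => (((1 - τ) ^ p / p.factorial) • A ^ p) * B) := by
    have : Summable (fun p : ℕ => ‖(((1 - τ) ^ p / p.factorial) • A ^ p) * B‖) := by
      apply Summable.of_nonneg_of_le (fun p => norm_nonneg _)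
        (fun p => norm_mul_le _ _)
      exact ((summable_coeff_norm A (1 - τ)).mul_right ‖B‖)
    exact this.of_norm
  have hmul : ∀ p q : ℕ,
      ((((1 - τ) ^ p / p.factorial) • A ^ p) * B) * ((τ ^ q / q.factorial) • A ^ q)
        = ((1 - τ) ^ p * τ ^ q / (p.factorial * q.factorial)) • (A ^ p * B * A ^ q) := by
    intro p q
    rw [smul_mul_assoc, smul_mul_assoc, mul_smul_comm, smul_smul]
    congr 1
    field_simp
  have hprod : Summable (fun pq : ℕ × ℕ =>
      ((1 - τ) ^ pq.1 * τ ^ pq.2 / (pq.1.factorial * pq.2.factorial))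
        • (A ^ pq.1 * B * A ^ pq.2)) := summable_g A B _ _
  calc NormedSpace.exp ((1 - τ) • A) * B * NormedSpace.exp (τ • A)
      = (∑' p : ℕ, ((1 - τ) ^ p / p.factorial) • A ^ p) * B
          * (∑' q : ℕ, (τ ^ q / q.factorial) • A ^ q) := by rw [exp_expand, exp_expand]
    _ = (∑' p : ℕ, (((1 - τ) ^ p / p.factorial) • A ^ p) * B)
          * (∑' q : ℕ, (τ ^ q / q.factorial) • A ^ q) := by rw [hu.tsum_mul_right]
    _ = ∑' p : ℕ, ((((1 - τ) ^ p / p.factorial) • A ^ p) * B)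
          * (∑' q : ℕ, (τ ^ q / q.factorial) • A ^ q) := (huB.tsum_mul_right _).symm
    _ = ∑' p : ℕ, ∑' q : ℕ, ((((1 - τ) ^ p / p.factorial) • A ^ p) * B)
          * ((τ ^ q / q.factorial) • A ^ q) :=
        tsum_congr fun p => (hv.tsum_mul_left _).symm
    _ = ∑' p : ℕ, ∑' q : ℕ,
          ((1 - τ) ^ p * τ ^ q / (p.factorial * q.factorial)) • (A ^ p * B * A ^ q) := by
        exact tsum_congr fun p => tsum_congr fun q => hmul p q
    _ = ∑' pq : ℕ × ℕ,
          ((1 - τ) ^ pq.1 * τ ^ pq.2 / (pq.1.factorial * pq.2.factorial))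
            • (A ^ pq.1 * B * A ^ pq.2) :=
        (Summable.tsum_prod' hprod fun p => (hprod.prod_factor p)).symm

lemma integral_eval (p q : ℕ) :
    (∫ τ in Set.Ioc (0:ℝ) 1,
        ((1 - τ) ^ p * τ ^ q / (p.factorial * q.factorial)) • (A ^ p * B * A ^ q))
      = ((p + q + 1).factorial : ℝ)⁻¹ • (A ^ p * B * A ^ q) := by
  rw [← intervalIntegral.integral_of_le zero_le_one,
    intervalIntegral.integral_smul_const]
  congr 1
  have e1 : (p.factorial : ℝ) ≠ 0 := Nat.cast_ne_zero.2 p.factorial_ne_zero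
  have e2 : (q.factorial : ℝ) ≠ 0 := Nat.cast_ne_zero.2 q.factorial_ne_zero
  have e3 : ((p + q + 1).factorial : ℝ) ≠ 0 := Nat.cast_ne_zero.2 (p + q + 1).factorial_ne_zero
  have : (fun τ : ℝ => (1 - τ) ^ p * τ ^ q / (p.factorial * q.factorial))
      = fun τ : ℝ => ((p.factorial * q.factorial : ℝ))⁻¹ * ((1 - τ) ^ p * τ ^ q) := by
    funext τ; ring
  rw [this, intervalIntegral.integral_const_mul, beta_nat]
  field_simp

lemma summable_F : Summable (fun pq : ℕ × ℕ =>
    ((pq.1 + pq.2 + 1).factorial : ℝ)⁻¹ • (A ^ pq.1 * B * A ^ pq.2)) := by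
  refine Summable.of_norm_bounded
    (Summable.mul_of_nonneg (Real.summable_pow_div_factorial ‖A‖)
      ((Real.summable_pow_div_factorial ‖A‖).mul_left
        ((‖(1:𝔸)‖ + 1) * (‖(1:𝔸)‖ + 1) * ‖B‖))
      (fun p => by positivity) (fun q => by positivity)) ?_
  rintro ⟨p, q⟩
  have hfac : (p.factorial * q.factorial : ℝ) ≤ ((p + q + 1).factorial : ℝ) := by
    have h1 : p.factorial * q.factorial ∣ (p + q).factorial :=
      Nat.factorial_mul_factorial_dvd_factorial_add p q
    have h2 : (p + q).factorial ≤ (p + q + 1).factorial :=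
      Nat.factorial_le (Nat.le_succ _)
    exact_mod_cast le_trans (Nat.le_of_dvd (p + q).factorial_pos h1) h2
  have e1 : (0:ℝ) < p.factorial * q.factorial := by positivity
  have hinv : ((p + q + 1).factorial : ℝ)⁻¹ ≤ (p.factorial * q.factorial : ℝ)⁻¹ :=
    inv_anti₀ e1 hfac
  rw [norm_smul, Real.norm_eq_abs, abs_of_nonneg (by positivity)]
  calc ((p + q + 1).factorial : ℝ)⁻¹ * ‖A ^ p * B * A ^ q‖
      ≤ (p.factorial * q.factorial : ℝ)⁻¹
          * (((‖(1:𝔸)‖ + 1) * (‖(1:𝔸)‖ + 1) * ‖B‖) * (‖A‖ ^ p * ‖A‖ ^ q)) :=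
        mul_le_mul hinv (term_bound A B p q) (norm_nonneg _) (by positivity)
    _ = ‖A‖ ^ p / p.factorial
          * (((‖(1:𝔸)‖ + 1) * (‖(1:𝔸)‖ + 1) * ‖B‖) * (‖A‖ ^ q / q.factorial)) := by
        field_simp

set_option maxHeartbeats 1000000 in
lemma regroup : (∑' pq : ℕ × ℕ,
      ((pq.1 + pq.2 + 1).factorial : ℝ)⁻¹ • (A ^ pq.1 * B * A ^ pq.2))
    = ∑' n : ℕ,
        ((n + 1).factorial : ℝ)⁻¹ • ∑ p ∈ Finset.range (n + 1), A ^ p * B * A ^ (n - p) := by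
  classical
  set F : ℕ × ℕ → 𝔸 :=
    fun pq => ((pq.1 + pq.2 + 1).factorial : ℝ)⁻¹ • (A ^ pq.1 * B * A ^ pq.2) with hF
  have hFs : Summable F := summable_F A B
  set e := Finset.HasAntidiagonal.sigmaAntidiagonalEquivProd (A := ℕ) with he
  have hs' : Summable (fun c : Σ n : ℕ, Finset.HasAntidiagonal.antidiagonal n => F (e c)) :=
    e.summable_iff.2 hFs
  rw [← e.tsum_eq F, Summable.tsum_sigma' (fun n => Summable.of_finite) hs']
  refine tsum_congr fun n => ?_
  have h2 : (∑' c : Finset.HasAntidiagonal.antidiagonal n, F (e ⟨n, c⟩))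
      = ∑ ij ∈ Finset.HasAntidiagonal.antidiagonal n, F ij := by
    have : (fun c : Finset.HasAntidiagonal.antidiagonal n => F (e ⟨n, c⟩))
        = fun c : Finset.HasAntidiagonal.antidiagonal n => F ↑c := rfl
    rw [this]
    exact Finset.tsum_subtype _ F
  rw [h2]
  have h3 : ∑ ij ∈ Finset.HasAntidiagonal.antidiagonal n, F ij
      = ∑ ij ∈ Finset.HasAntidiagonal.antidiagonal n,
          ((n + 1).factorial : ℝ)⁻¹ • (A ^ ij.1 * B * A ^ ij.2) := by
    refine Finset.sum_congr rfl fun ij hij => ?_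
    rw [Finset.HasAntidiagonal.mem_antidiagonal] at hij
    rw [hF]
    simp only []
    rw [hij]
  rw [h3, Finset.Nat.sum_antidiagonal_eq_sum_range_succ_mk
    (fun ij => ((n + 1).factorial : ℝ)⁻¹ • (A ^ ij.1 * B * A ^ ij.2)) n, Finset.smul_sum]

set_option maxHeartbeats 1000000 in
lemma summable_part1 :
    Summable (fun n : ℕ =>
      ‖(Nat.factorial (n + 1) : ℝ)⁻¹ • ∑ p ∈ Finset.range (n + 1), A ^ p * B * A ^ (n - p)‖) := by
  set D : ℝ := (‖(1:𝔸)‖ + 1) * (‖(1:𝔸)‖ + 1) * ‖B‖ with hD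
  refine Summable.of_nonneg_of_le (fun n => norm_nonneg _) (fun n => ?_)
    ((Real.summable_pow_div_factorial ‖A‖).mul_left D)
  have hsum : ‖∑ p ∈ Finset.range (n + 1), A ^ p * B * A ^ (n - p)‖
      ≤ (n + 1) * (D * ‖A‖ ^ n) := by
    calc ‖∑ p ∈ Finset.range (n + 1), A ^ p * B * A ^ (n - p)‖
        ≤ ∑ p ∈ Finset.range (n + 1), ‖A ^ p * B * A ^ (n - p)‖ := norm_sum_le _ _
      _ ≤ ∑ _p ∈ Finset.range (n + 1), D * ‖A‖ ^ n := by
          refine Finset.sum_le_sum fun p hp => ?_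
          rw [Finset.mem_range, Nat.lt_succ_iff] at hp
          have := term_bound A B p (n - p)
          rwa [← pow_add, Nat.add_sub_cancel' hp] at this
      _ = (n + 1) * (D * ‖A‖ ^ n) := by
          rw [Finset.sum_const, Finset.card_range, nsmul_eq_mul]; push_cast; ring
  rw [norm_smul, Real.norm_eq_abs, abs_of_nonneg (by positivity)]
  calc ((n + 1).factorial : ℝ)⁻¹ * ‖∑ p ∈ Finset.range (n + 1), A ^ p * B * A ^ (n - p)‖
      ≤ ((n + 1).factorial : ℝ)⁻¹ * ((n + 1) * (D * ‖A‖ ^ n)) := by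
        apply mul_le_mul_of_nonneg_left hsum (by positivity)
    _ = D * (‖A‖ ^ n / n.factorial) := by
        rw [Nat.factorial_succ]
        have e1 : (n.factorial : ℝ) ≠ 0 := Nat.cast_ne_zero.2 n.factorial_ne_zero
        have e2 : ((n:ℝ) + 1) ≠ 0 := by positivity
        push_cast
        field_simp

set_option maxHeartbeats 1000000 in
lemma interchange :
    (∫ τ in (0 : ℝ)..1, NormedSpace.exp ((1 - τ) • A) * B * NormedSpace.exp (τ • A))
      = ∑' pq : ℕ × ℕ, ((pq.1 + pq.2 + 1).factorial : ℝ)⁻¹ • (A ^ pq.1 * B * A ^ pq.2) := by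
  set D : ℝ := (‖(1:𝔸)‖ + 1) * (‖(1:𝔸)‖ + 1) * ‖B‖ with hD
  set g : ℕ × ℕ → ℝ → 𝔸 := fun pq τ =>
    ((1 - τ) ^ pq.1 * τ ^ pq.2 / (pq.1.factorial * pq.2.factorial)) • (A ^ pq.1 * B * A ^ pq.2)
    with hg
  set M : ℕ × ℕ → ℝ := fun pq =>
    (‖A‖ ^ pq.1 / pq.1.factorial) * (D * (‖A‖ ^ pq.2 / pq.2.factorial)) with hM
  have hM0 : ∀ pq, 0 ≤ M pq := fun pq => by rw [hM]; positivity
  have hMsum : Summable M :=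
    Summable.mul_of_nonneg (Real.summable_pow_div_factorial ‖A‖)
      ((Real.summable_pow_div_factorial ‖A‖).mul_left D)
      (fun p => by positivity) (fun q => by positivity)
  have hmeas : ∀ pq : ℕ × ℕ,
      AEStronglyMeasurable (g pq) (MeasureTheory.volume.restrict (Set.Ioc (0:ℝ) 1)) := by
    intro pq
    apply Continuous.aestronglyMeasurable
    exact (((continuous_const.sub continuous_id).pow pq.1).mul
      ((continuous_id.pow pq.2))).div_const _ |>.smul continuous_const
  have hbound : ∀ pq : ℕ × ℕ, ∀ τ ∈ Set.Ioc (0:ℝ) 1, ‖g pq τ‖ ≤ M pq := by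
    rintro ⟨p, q⟩ τ ⟨h0, h1⟩
    have h1' : |1 - τ| ≤ 1 := by rw [abs_of_nonneg (by linarith)]; linarith
    have h0' : |τ| ≤ 1 := by rw [abs_of_nonneg h0.le]; linarith
    rw [hg, norm_smul, Real.norm_eq_abs, abs_div, abs_mul, abs_pow, abs_pow,
      abs_of_nonneg (by positivity : (0:ℝ) ≤ (p.factorial * q.factorial : ℝ))]
    have e1 : (0:ℝ) < (p.factorial * q.factorial : ℝ) := by positivity
    calc |1 - τ| ^ p * |τ| ^ q / (p.factorial * q.factorial : ℝ) * ‖A ^ p * B * A ^ q‖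
        ≤ 1 * 1 / (p.factorial * q.factorial : ℝ) * (D * (‖A‖ ^ p * ‖A‖ ^ q)) := by
          gcongr
          · exact pow_le_one₀ (abs_nonneg _) h1'
          · exact pow_le_one₀ (abs_nonneg _) h0'
          · exact term_bound A B p q
      _ = M (p, q) := by
          rw [hM]
          have f1 : (p.factorial : ℝ) ≠ 0 := Nat.cast_ne_zero.2 p.factorial_ne_zero
          have f2 : (q.factorial : ℝ) ≠ 0 := Nat.cast_ne_zero.2 q.factorial_ne_zero
          field_simp
  have hlint : (∑' pq : ℕ × ℕ,
      ∫⁻ τ in Set.Ioc (0:ℝ) 1, ‖g pq τ‖₊ ∂MeasureTheory.volume) ≠ ⊤ := by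
    have hle : ∀ pq : ℕ × ℕ,
        (∫⁻ τ in Set.Ioc (0:ℝ) 1, ‖g pq τ‖₊ ∂MeasureTheory.volume)
          ≤ ENNReal.ofReal (M pq) := by
      intro pq
      calc (∫⁻ τ in Set.Ioc (0:ℝ) 1, ‖g pq τ‖₊ ∂MeasureTheory.volume)
          ≤ ∫⁻ _τ in Set.Ioc (0:ℝ) 1, ENNReal.ofReal (M pq) ∂MeasureTheory.volume := by
            refine MeasureTheory.setLIntegral_mono measurable_const fun τ hτ => ?_
            rw [← ENNReal.ofReal_coe_nnreal, coe_nnnorm]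
            exact ENNReal.ofReal_le_ofReal (hbound pq τ hτ)
        _ = ENNReal.ofReal (M pq) * MeasureTheory.volume (Set.Ioc (0:ℝ) 1) :=
            MeasureTheory.setLIntegral_const _ _
        _ = ENNReal.ofReal (M pq) := by
            rw [Real.volume_Ioc]
            norm_num
    refine ne_top_of_le_ne_top ?_ (ENNReal.tsum_le_tsum hle)
    rw [← ENNReal.ofReal_tsum_of_nonneg hM0 hMsum]
    exact ENNReal.ofReal_ne_top
  calc (∫ τ in (0 : ℝ)..1, NormedSpace.exp ((1 - τ) • A) * B * NormedSpace.exp (τ • A))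
      = ∫ τ in (0 : ℝ)..1, ∑' pq : ℕ × ℕ, g pq τ :=
        intervalIntegral.integral_congr fun τ _ => pointwise A B τ
    _ = ∫ τ in Set.Ioc (0:ℝ) 1, ∑' pq : ℕ × ℕ, g pq τ ∂MeasureTheory.volume :=
        intervalIntegral.integral_of_le zero_le_one
    _ = ∑' pq : ℕ × ℕ, ∫ τ in Set.Ioc (0:ℝ) 1, g pq τ ∂MeasureTheory.volume :=
        MeasureTheory.integral_tsum hmeas hlint
    _ = ∑' pq : ℕ × ℕ, ((pq.1 + pq.2 + 1).factorial : ℝ)⁻¹ • (A ^ pq.1 * B * A ^ pq.2) :=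
        tsum_congr fun pq => integral_eval A B pq.1 pq.2

end main

theorem duhamel_integral_eq_tsum {𝔸 : Type*} [NormedRing 𝔸] [NormedAlgebra ℝ 𝔸]
    [CompleteSpace 𝔸] (A B : 𝔸) :
    Summable (fun n : ℕ =>
        ‖(Nat.factorial (n + 1) : ℝ)⁻¹ • ∑ p ∈ Finset.range (n + 1), A ^ p * B * A ^ (n - p)‖) ∧
    (∫ τ in (0 : ℝ)..1, NormedSpace.exp ((1 - τ) • A) * B * NormedSpace.exp (τ • A))
      = ∑' n : ℕ,
          (Nat.factorial (n + 1) : ℝ)⁻¹ • ∑ p ∈ Finset.range (n + 1), A ^ p * B * A ^ (n - p) := by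
  exact ⟨summable_part1 A B, (interchange A B).trans (regroup A B)⟩
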